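/- Let T : ℝⁿ → ℝⁿ be a perfect-information finite Shapley operator. Assume T admits an invariant half-line with direction ν (i.e., T(u + αν) = u + (α+1)ν for some u and all α large enough) and that each reduced operator T^σ admits an invariant half-line with direction ν^σ (these hypotheses hold automatically by Kohlberg's theorem). Then the upper mean payoffs satisfy max_{1≤i≤n} ν_i = min_σ max_{1≤i≤n} ν^σ_i, where the minimum is over all policies σ of player Min. -/

import Mathlib

lemma lexMin {ι : Type*} [Fintype ι] [Nonempty ι] (c s : ι → ℝ) :
    ∃ j M, ∀ α ≥ M, ∀ k, c j + α * s j ≤ c k + α * s k := by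
  obtain ⟨j, -, hj⟩ := Finset.exists_min_image Finset.univ
    (fun k => toLex (s k, c k) : ι → ℝ ×ₗ ℝ) Finset.univ_nonempty
  refine ⟨j, Finset.univ.sup' Finset.univ_nonempty
    (fun k => if s j < s k then (c j - c k) / (s k - s j) else 0), fun α hα k => ?_⟩
  have h := hj k (Finset.mem_univ k)
  rw [Prod.Lex.le_iff] at h
  rcases h with h | ⟨h1, h2⟩
  · simp only [ofLex_toLex] at h
    have hM : (c j - c k) / (s k - s j) ≤ α := by
      refine le_trans (le_trans (le_of_eq ?_) (Finset.le_sup' _ (Finset.mem_univ k))) hα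
      simp [h]
    have := (div_le_iff₀ (by linarith : (0:ℝ) < s k - s j)).mp hM
    nlinarith
  · simp only [ofLex_toLex] at h1 h2
    rw [h1]; linarith

lemma lexMax {ι : Type*} [Fintype ι] [Nonempty ι] (c s : ι → ℝ) :
    ∃ j M, ∀ α ≥ M, ∀ k, c k + α * s k ≤ c j + α * s j := by
  obtain ⟨j, M, hj⟩ := lexMin (fun k => -c k) (fun k => -s k)
  exact ⟨j, M, fun α hα k => by have := hj α hα k; simp at this; linarith⟩



/-- Perfect-information finite Shapley operator. -/
noncomputable def shapleyOp {n : ℕ} (A : Fin n → Type) [∀ i, Fintype (A i)] [∀ i, Nonempty (A i)]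
    (B : ∀ i, A i → Type) [∀ i a, Fintype (B i a)] [∀ i a, Nonempty (B i a)]
    (r : ∀ i, ∀ a : A i, B i a → ℝ) (P : ∀ i, ∀ a : A i, B i a → Fin n → ℝ) :
    (Fin n → ℝ) → (Fin n → ℝ) :=
  fun x i => ⨅ a : A i, ⨆ b : B i a, (r i a b + ∑ j, P i a b j * x j)

/-- Reduced Shapley operator `T^σ` obtained by fixing a policy `σ` of player Min. -/
noncomputable def reducedOp {n : ℕ} (A : Fin n → Type)
    (B : ∀ i, A i → Type) [∀ i a, Fintype (B i a)] [∀ i a, Nonempty (B i a)]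
    (r : ∀ i, ∀ a : A i, B i a → ℝ) (P : ∀ i, ∀ a : A i, B i a → Fin n → ℝ)
    (σ : ∀ i, A i) : (Fin n → ℝ) → (Fin n → ℝ) :=
  fun x i => ⨆ b : B i (σ i), (r i (σ i) b + ∑ j, P i (σ i) b j * x j)


lemma reducedOp_le_add {n : ℕ} {A : Fin n → Type} {B : ∀ i, A i → Type}
    [∀ i a, Fintype (B i a)] [∀ i a, Nonempty (B i a)]
    {r : ∀ i, ∀ a : A i, B i a → ℝ} {P : ∀ i, ∀ a : A i, B i a → Fin n → ℝ}
    (hP : ∀ i a b, (∀ j, 0 ≤ P i a b j) ∧ ∑ j, P i a b j = 1)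
    (σ : ∀ i, A i) (x y : Fin n → ℝ) (c : ℝ) (h : ∀ j, x j ≤ y j + c) (i : Fin n) :
    reducedOp A B r P σ x i ≤ reducedOp A B r P σ y i + c := by
  unfold reducedOp
  apply ciSup_le
  intro b
  have h1 : ∑ j, P i (σ i) b j * x j ≤ ∑ j, P i (σ i) b j * (y j + c) :=
    Finset.sum_le_sum fun j _ => mul_le_mul_of_nonneg_left (h j) ((hP i (σ i) b).1 j)
  have h2 : ∑ j, P i (σ i) b j * (y j + c) = (∑ j, P i (σ i) b j * y j) + c := by
    simp only [mul_add, Finset.sum_add_distrib, ← Finset.sum_mul, (hP i (σ i) b).2, one_mul]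
  have h3 : r i (σ i) b + ∑ j, P i (σ i) b j * y j ≤
      ⨆ b' : B i (σ i), (r i (σ i) b' + ∑ j, P i (σ i) b' j * y j) :=
    le_ciSup (f := fun b' : B i (σ i) => r i (σ i) b' + ∑ j, P i (σ i) b' j * y j)
      (Set.Finite.bddAbove (Set.finite_range _)) b
  linarith

lemma shapley_le_reduced {n : ℕ} {A : Fin n → Type} [∀ i, Fintype (A i)] [∀ i, Nonempty (A i)]
    {B : ∀ i, A i → Type} [∀ i a, Fintype (B i a)] [∀ i a, Nonempty (B i a)]
    {r : ∀ i, ∀ a : A i, B i a → ℝ} {P : ∀ i, ∀ a : A i, B i a → Fin n → ℝ}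
    (σ : ∀ i, A i) (x : Fin n → ℝ) (i : Fin n) :
    shapleyOp A B r P x i ≤ reducedOp A B r P σ x i :=
  ciInf_le (Set.Finite.bddBelow (Set.finite_range _)) (σ i)

lemma orbit_formula {n : ℕ} (F : (Fin n → ℝ) → (Fin n → ℝ)) (w v : Fin n → ℝ) (β : ℝ)
    (h : ∀ α ≥ β, F (w + α • v) = w + (α + 1) • v) (k : ℕ) :
    F^[k] (w + β • v) = w + (β + k) • v := by
  induction k with
  | zero => simp
  | succ k ih =>
    rw [Function.iterate_succ_apply', ih, h (β + k) (by linarith [Nat.cast_nonneg (α := ℝ) k])]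
    congr 2
    push_cast
    ring

lemma iterate_compare {n : ℕ} (F G : (Fin n → ℝ) → (Fin n → ℝ))
    (hFG : ∀ x i, F x i ≤ G x i)
    (hG : ∀ x y c, (∀ j, x j ≤ y j + c) → ∀ i, G x i ≤ G y i + c)
    (x y : Fin n → ℝ) (c : ℝ) (hxy : ∀ j, x j ≤ y j + c) :
    ∀ k, ∀ i, F^[k] x i ≤ G^[k] y i + c := by
  intro k
  induction k with
  | zero => exact hxy
  | succ k ih =>
    intro i
    rw [Function.iterate_succ_apply', Function.iterate_succ_apply']
    calc F (F^[k] x) i ≤ G (F^[k] x) i := hFG _ i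
      _ ≤ G (G^[k] y) i + c := hG _ _ c ih i

lemma sup_growth_le {n : ℕ} (hn : 0 < n) (w v w' v' : Fin n → ℝ) (β β' c : ℝ)
    (h : ∀ k : ℕ, ∀ i, w i + (β + k) * v i ≤ (⨆ i', w' i' + (β' + k) * v' i') + c) :
    (⨆ i, v i) ≤ ⨆ i, v' i := by
  have : Nonempty (Fin n) := ⟨⟨0, hn⟩⟩
  by_contra hlt
  push_neg at hlt
  obtain ⟨i₀, hi₀⟩ : ∃ i₀, ∀ i, v i ≤ v i₀ := Finite.exists_max v
  have hv : (⨆ i, v i) = v i₀ :=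
    le_antisymm (ciSup_le hi₀) (le_ciSup (Set.Finite.bddAbove (Set.finite_range v)) i₀)
  rw [hv] at hlt
  set W' := ⨆ i, w' i with hW'
  set V' := ⨆ i, v' i with hV'
  obtain ⟨k, hk⟩ := exists_nat_gt (max (-β') ((W' + β' * V' + c - w i₀ - β * v i₀) / (v i₀ - V')))
  have hk1 : (0:ℝ) ≤ β' + k := by
    have := lt_of_le_of_lt (le_max_left _ _) hk; linarith
  have hk2 : (W' + β' * V' + c - w i₀ - β * v i₀) < k * (v i₀ - V') := by
    have := lt_of_le_of_lt (le_max_right _ _) hk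
    rw [div_lt_iff₀ (by linarith)] at this; linarith
  have hsup : (⨆ i', w' i' + (β' + k) * v' i') ≤ W' + (β' + k) * V' := by
    apply ciSup_le; intro i
    have h1 : w' i ≤ W' := le_ciSup (Set.Finite.bddAbove (Set.finite_range w')) i
    have h2 : v' i ≤ V' := le_ciSup (Set.Finite.bddAbove (Set.finite_range v')) i
    nlinarith
  have hfin := h k i₀
  nlinarith

lemma halfline_sup_le {n : ℕ} (hn : 0 < n) (F G : (Fin n → ℝ) → (Fin n → ℝ))
    (hFG : ∀ x i, F x i ≤ G x i)
    (hG : ∀ x y c, (∀ j, x j ≤ y j + c) → ∀ i, G x i ≤ G y i + c)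
    (w v w' v' : Fin n → ℝ) (β β' : ℝ)
    (hF : ∀ α ≥ β, F (w + α • v) = w + (α + 1) • v)
    (hG' : ∀ α ≥ β', G (w' + α • v') = w' + (α + 1) • v') :
    (⨆ i, v i) ≤ ⨆ i, v' i := by
  have hne : Nonempty (Fin n) := ⟨⟨0, hn⟩⟩
  set x := w + β • v with hx
  set y := w' + β' • v' with hy
  set c := ⨆ j, (x j - y j) with hc
  have hxy : ∀ j, x j ≤ y j + c := by
    intro j
    have := le_ciSup (f := fun j => x j - y j)
      (Set.Finite.bddAbove (Set.finite_range _)) j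
    rw [← hc] at this
    linarith
  have hcomp := iterate_compare F G hFG hG x y c hxy
  apply sup_growth_le hn w v w' v' β β' c
  intro k i
  have h1 := hcomp k i
  rw [hx, hy, orbit_formula F w v β hF k, orbit_formula G w' v' β' hG' k] at h1
  simp only [Pi.add_apply, Pi.smul_apply, smul_eq_mul] at h1
  have h2 : w' i + (β' + ↑k) * v' i ≤ ⨆ i', w' i' + (β' + ↑k) * v' i' :=
    le_ciSup (f := fun i' => w' i' + (β' + (k:ℝ)) * v' i')
      (Set.Finite.bddAbove (Set.finite_range _)) i
  linarith

/-- the upper mean payoff of `T` is the minimum over policies `σ` of player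
Min of the upper mean payoffs of the reduced operators `T^σ`:
`max_i ν_i = min_σ max_i ν^σ_i`. -/
theorem stmt4 {n : ℕ} (hn : 0 < n)
    (A : Fin n → Type) [∀ i, Fintype (A i)] [∀ i, Nonempty (A i)]
    (B : ∀ i, A i → Type) [∀ i a, Fintype (B i a)] [∀ i a, Nonempty (B i a)]
    (r : ∀ i, ∀ a : A i, B i a → ℝ) (P : ∀ i, ∀ a : A i, B i a → Fin n → ℝ)
    (hP : ∀ i a b, (∀ j, 0 ≤ P i a b j) ∧ ∑ j, P i a b j = 1)
    (T : (Fin n → ℝ) → (Fin n → ℝ)) (hT : T = shapleyOp A B r P)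
    (u ν : Fin n → ℝ) (α₀ : ℝ)
    (hhalf : ∀ α ≥ α₀, T (u + α • ν) = u + (α + 1) • ν)
    (νs : (∀ i, A i) → Fin n → ℝ)
    (hhalfσ : ∀ σ : ∀ i, A i, ∃ (uσ : Fin n → ℝ) (ασ : ℝ),
      ∀ α ≥ ασ, reducedOp A B r P σ (uσ + α • νs σ) = uσ + (α + 1) • νs σ) :
    (⨆ i, ν i) = ⨅ σ : ∀ i, A i, ⨆ i, νs σ i := by
  classical
  subst hT
  have hne : Nonempty (Fin n) := ⟨⟨0, hn⟩⟩
  -- abbreviations for intercepts and slopes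
  set cc : ∀ i, ∀ a : A i, B i a → ℝ := fun i a b => r i a b + ∑ j, P i a b j * u j with hcc
  set ss : ∀ i, ∀ a : A i, B i a → ℝ := fun i a b => ∑ j, P i a b j * ν j with hss
  have hbody : ∀ (α : ℝ) (i : Fin n) (a : A i) (b : B i a),
      r i a b + ∑ j, P i a b j * (u + α • ν) j = cc i a b + α * ss i a b := by
    intro α i a b
    simp only [Pi.add_apply, Pi.smul_apply, smul_eq_mul, hcc, hss]
    rw [Finset.mul_sum, add_assoc, ← Finset.sum_add_distrib]
    congr 1
    exact Finset.sum_congr rfl fun j _ => by ring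
  -- choose eventually-optimal b for each (i, a)
  have hstar : ∀ (i : Fin n) (a : A i), ∃ (b : B i a) (M : ℝ), ∀ α ≥ M, ∀ b',
      cc i a b' + α * ss i a b' ≤ cc i a b + α * ss i a b :=
    fun i a => lexMax (cc i a) (ss i a)
  choose bs Mb hMb using hstar
  -- choose eventually-optimal a for each i
  have hsig : ∀ i : Fin n, ∃ (a : A i) (M : ℝ), ∀ α ≥ M, ∀ a',
      cc i a (bs i a) + α * ss i a (bs i a) ≤ cc i a' (bs i a') + α * ss i a' (bs i a') :=
    fun i => lexMin (fun a => cc i a (bs i a)) (fun a => ss i a (bs i a))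
  choose σ Ma hMa using hsig
  set α₁ := max α₀ (Finset.univ.sup' Finset.univ_nonempty
    (fun i : Fin n => max (Ma i) (Finset.univ.sup' Finset.univ_nonempty
      (fun a : A i => Mb i a)))) with hα₁
  have hα₀le : α₀ ≤ α₁ := le_max_left _ _
  have hMble : ∀ (i : Fin n) (a : A i), Mb i a ≤ α₁ := by
    intro i a
    calc Mb i a ≤ Finset.univ.sup' Finset.univ_nonempty (fun a : A i => Mb i a) :=
          Finset.le_sup' _ (Finset.mem_univ a)
      _ ≤ max (Ma i) (Finset.univ.sup' Finset.univ_nonempty (fun a : A i => Mb i a)) :=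
          le_max_right _ _
      _ ≤ Finset.univ.sup' Finset.univ_nonempty (fun i : Fin n => max (Ma i)
            (Finset.univ.sup' Finset.univ_nonempty (fun a : A i => Mb i a))) :=
          Finset.le_sup' (fun i : Fin n => max (Ma i)
            (Finset.univ.sup' Finset.univ_nonempty (fun a : A i => Mb i a)))
            (Finset.mem_univ i)
      _ ≤ α₁ := le_max_right _ _
  have hMale : ∀ i : Fin n, Ma i ≤ α₁ := by
    intro i
    calc Ma i ≤ max (Ma i) (Finset.univ.sup' Finset.univ_nonempty (fun a : A i => Mb i a)) :=
          le_max_left _ _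
      _ ≤ Finset.univ.sup' Finset.univ_nonempty (fun i : Fin n => max (Ma i)
            (Finset.univ.sup' Finset.univ_nonempty (fun a : A i => Mb i a))) :=
          Finset.le_sup' (fun i : Fin n => max (Ma i)
            (Finset.univ.sup' Finset.univ_nonempty (fun a : A i => Mb i a)))
            (Finset.mem_univ i)
      _ ≤ α₁ := le_max_right _ _
  have hkey : ∀ α ≥ α₁, reducedOp A B r P σ (u + α • ν) = u + (α + 1) • ν := by
    intro α hα
    rw [← hhalf α (le_trans hα₀le hα)]
    funext i
    have hgeq : ∀ a : A i,
        (⨆ b : B i a, (r i a b + ∑ j, P i a b j * (u + α • ν) j))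
          = cc i a (bs i a) + α * ss i a (bs i a) := by
      intro a
      apply le_antisymm
      · apply ciSup_le
        intro b
        rw [hbody]
        exact hMb i a α (le_trans (hMble i a) hα) b
      · rw [← hbody α i a (bs i a)]
        exact le_ciSup (f := fun b : B i a => r i a b + ∑ j, P i a b j * (u + α • ν) j)
          (Set.Finite.bddAbove (Set.finite_range _)) (bs i a)
    show (⨆ b : B i (σ i), (r i (σ i) b + ∑ j, P i (σ i) b j * (u + α • ν) j))
        = ⨅ a : A i, ⨆ b : B i a, (r i a b + ∑ j, P i a b j * (u + α • ν) j)
    rw [hgeq (σ i)]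
    apply le_antisymm
    · apply le_ciInf
      intro a
      rw [hgeq a]
      exact hMa i α (le_trans (hMale i) hα) a
    · refine le_trans (ciInf_le (Set.Finite.bddBelow (Set.finite_range _)) (σ i)) ?_
      rw [hgeq (σ i)]
  obtain ⟨uσ, ασ, hσ⟩ := hhalfσ σ
  apply le_antisymm
  · apply le_ciInf
    intro τ
    obtain ⟨uτ, ατ, hτ⟩ := hhalfσ τ
    exact halfline_sup_le hn (shapleyOp A B r P) (reducedOp A B r P τ)
      (fun x i => shapley_le_reduced τ x i) (reducedOp_le_add hP τ)
      u ν uτ (νs τ) α₀ ατ hhalf hτ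
  · calc (⨅ σ' : ∀ i, A i, ⨆ i, νs σ' i) ≤ ⨆ i, νs σ i :=
        ciInf_le (Set.Finite.bddBelow (Set.finite_range _)) σ
      _ ≤ ⨆ i, ν i :=
        halfline_sup_le hn (reducedOp A B r P σ) (reducedOp A B r P σ)
          (fun x i => le_refl _) (reducedOp_le_add hP σ)
          uσ (νs σ) u ν ασ α₁ hσ hkey
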